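/- For all real h and k, the derivative with respect to h of Owen's T function T(h,k) equals -(1/(2√(2π))) · exp(-h²/2) · erf(k·h/√2). -/

import Mathlib

open Real MeasureTheory

noncomputable def erf (x : ℝ) : ℝ := 2 / Real.sqrt π * ∫ s in (0:ℝ)..x, Real.exp (-s^2)

noncomputable def owenT (h k : ℝ) : ℝ :=
  (1 / (2 * π)) * ∫ s in (0:ℝ)..k, (1 / (1 + s^2)) * Real.exp (-h^2 * (1 + s^2) / 2)

lemma gauss_hasDerivAt (y : ℝ) :
    HasDerivAt (fun t : ℝ => ∫ u in (0:ℝ)..t, Real.exp (-u^2)) (Real.exp (-y^2)) y := by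
  have hc : Continuous fun u : ℝ => Real.exp (-u^2) := by continuity
  exact intervalIntegral.integral_hasDerivAt_right (hc.intervalIntegrable 0 y)
    (hc.stronglyMeasurableAtFilter _ _) hc.continuousAt

theorem owenT_deriv (h k : ℝ) :
    HasDerivAt (fun x => owenT x k)
      (-(1 / (2 * Real.sqrt (2 * π))) * Real.exp (-h^2 / 2) * erf (k * h / Real.sqrt 2)) h := by
  have h1s : ∀ s : ℝ, (0:ℝ) < 1 + s^2 := fun s => by positivity
  -- derivative under the integral sign
  set F : ℝ → ℝ → ℝ := fun x s => (1 / (1 + s^2)) * Real.exp (-x^2 * (1 + s^2) / 2) with hF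
  set F' : ℝ → ℝ → ℝ := fun x s => -x * Real.exp (-x^2 * (1 + s^2) / 2) with hF'
  have hFc : ∀ x : ℝ, Continuous (F x) := by
    intro x
    apply Continuous.mul
    · exact continuous_const.div (by continuity) (fun s => (h1s s).ne')
    · continuity
  have hF'c : Continuous (F' h) := by
    apply Continuous.mul continuous_const
    continuity
  have hdiff : ∀ (s x : ℝ), HasDerivAt (fun x => F x s) (F' x s) x := by
    intro s x
    have h1 : HasDerivAt (fun x : ℝ => -x^2 * (1 + s^2) / 2)
        (-(2*x) * (1 + s^2) / 2) x := by
      have := ((hasDerivAt_pow 2 x).neg.mul_const (1 + s^2)).div_const 2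
      simpa using this
    have h2 := (h1.exp).const_mul (1 / (1 + s^2))
    refine h2.congr_deriv (Eq.symm ?_)
    simp only [hF']
    field_simp
  have key := intervalIntegral.hasDerivAt_integral_of_dominated_loc_of_deriv_le
    (F := F) (F' := F') (x₀ := h) (a := (0:ℝ)) (b := k) (μ := volume)
    (bound := fun _ => |h| + 1) (s := Metric.ball h 1) (Metric.ball_mem_nhds h one_pos)
    (Filter.Eventually.of_forall fun x => ((hFc x).aestronglyMeasurable).restrict)
    ((hFc h).intervalIntegrable 0 k)
    (hF'c.aestronglyMeasurable.restrict)
    (Filter.Eventually.of_forall fun s _ x hx => by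
      have hx' : |x - h| < 1 := by simpa [Metric.mem_ball, Real.dist_eq] using hx
      have hxb : |x| ≤ |h| + 1 := by
        have := abs_sub_abs_le_abs_sub x h
        linarith
      have hexp : Real.exp (-x^2 * (1 + s^2) / 2) ≤ 1 := by
        apply Real.exp_le_one_iff.mpr
        nlinarith [sq_nonneg x, (h1s s).le, sq_nonneg (x*s)]
      have hexp0 : (0:ℝ) < Real.exp (-x^2 * (1 + s^2) / 2) := Real.exp_pos _
      calc ‖F' x s‖ = |x| * Real.exp (-x^2 * (1 + s^2) / 2) := by
            simp [hF', abs_mul, abs_of_pos hexp0]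
        _ ≤ (|h| + 1) * 1 := by
            apply mul_le_mul hxb hexp hexp0.le (by positivity)
        _ = |h| + 1 := mul_one _)
    (intervalIntegrable_const)
    (Filter.Eventually.of_forall fun s _ x _ => hdiff s x)
  have hderiv : HasDerivAt (fun x => ∫ s in (0:ℝ)..k, F x s)
      (∫ s in (0:ℝ)..k, F' h s) h := key.2
  -- evaluate the integral of F' h
  set φ : ℝ → ℝ := fun s =>
    -(Real.exp (-h^2/2) * Real.sqrt 2 * ∫ u in (0:ℝ)..(h * s / Real.sqrt 2), Real.exp (-u^2))
    with hφ
  have hs2 : (Real.sqrt 2) ^ 2 = 2 := Real.sq_sqrt (by norm_num)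
  have hs2pos : (0:ℝ) < Real.sqrt 2 := Real.sqrt_pos.mpr (by norm_num)
  have hφd : ∀ s : ℝ, HasDerivAt φ (F' h s) s := by
    intro s
    have hlin : HasDerivAt (fun s : ℝ => h * s / Real.sqrt 2) (h / Real.sqrt 2) s := by
      simpa using ((hasDerivAt_id s).const_mul h).div_const (Real.sqrt 2)
    have hcomp := (gauss_hasDerivAt (h * s / Real.sqrt 2)).comp s hlin
    have := (hcomp.const_mul (Real.exp (-h^2/2) * Real.sqrt 2)).neg
    refine this.congr_deriv (Eq.symm ?_)
    show -h * Real.exp (-h^2 * (1 + s^2) / 2) = _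
    have e1 : -(h * s / Real.sqrt 2)^2 = -h^2 * s^2 / 2 := by
      rw [div_pow, hs2]; ring
    rw [e1]
    rw [show -h^2 * (1 + s^2) / 2 = -h^2/2 + -h^2 * s^2 / 2 by ring, Real.exp_add]
    field_simp
  have hint : (∫ s in (0:ℝ)..k, F' h s) = φ k - φ 0 := by
    apply intervalIntegral.integral_eq_sub_of_hasDerivAt
    · exact fun s _ => hφd s
    · exact hF'c.intervalIntegrable 0 k
  have hφ0 : φ 0 = 0 := by simp [hφ]
  -- assemble
  have final := hderiv.const_mul (1 / (2 * π))
  have heq : (1 / (2 * π)) * ∫ s in (0:ℝ)..k, F' h s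
      = -(1 / (2 * Real.sqrt (2 * π))) * Real.exp (-h^2 / 2) * erf (k * h / Real.sqrt 2) := by
    rw [hint, hφ0, sub_zero, hφ]
    simp only
    rw [erf]
    have h2p : Real.sqrt (2 * π) = Real.sqrt 2 * Real.sqrt π :=
      Real.sqrt_mul (by norm_num) π
    have hπpos : (0:ℝ) < Real.sqrt π := Real.sqrt_pos.mpr Real.pi_pos
    have hπ2 : (Real.sqrt π) ^ 2 = π := Real.sq_sqrt Real.pi_pos.le
    rw [h2p]
    rw [show h * k / Real.sqrt 2 = k * h / Real.sqrt 2 by ring]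
    set I := ∫ u in (0:ℝ)..(k * h / Real.sqrt 2), Real.exp (-u^2)
    have : π = (Real.sqrt π)^2 := hπ2.symm
    field_simp
    linear_combination (-(I * (Real.sqrt π)^2)) * hs2
      + (-2 * I) * hπ2
  rw [heq] at final
  exact final
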